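/- arXiv:1808.05784 — 3 statements merged into one kernel-verified Lean document; each statement's English description precedes it below -/
import Mathlib

section
/- For all posterior distributions Q_1,…,Q_V over the voter sets H_1,…,H_V and any hyper-posterior distribution ρ over the V views, if the multiview Gibbs risk satisfies R_D(G_ρ) < 1/2, then the risk of the multiview weighted majority vote satisfies R_D(B_ρ) ≤ 1 − (1 − 2·E_{v∼ρ} R_D(G_{Q_v}))² / (1 − 2·E_{v∼ρ} d_D(Q_v)). -/
open MeasureTheory

noncomputable section

/-- The 0-1 loss: `1` if the two values differ, `0` otherwise. -/
def zoLoss (a b : ℝ) : ℝ := if a = b then 0 else 1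

lemma zoLoss_eq {a b : ℝ} (ha : a = 1 ∨ a = -1) (hb : b = 1 ∨ b = -1) :
    zoLoss a b = (1 - a * b) / 2 := by
  rcases ha with rfl | rfl <;> rcases hb with rfl | rfl <;> norm_num [zoLoss]

lemma zoLoss_comm (a b : ℝ) : zoLoss a b = zoLoss b a := by
  simp [zoLoss, eq_comm]

lemma integrable_of_bound {α : Type*} [MeasurableSpace α] {μ : Measure α} [IsFiniteMeasure μ]
    {f : α → ℝ} (hf : AEStronglyMeasurable f μ) (C : ℝ) (h : ∀ᵐ x ∂μ, |f x| ≤ C) :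
    Integrable f μ :=
  (integrable_const C).mono' hf (h.mono fun _ hx => by simpa [Real.norm_eq_abs] using hx)

section PerView

variable {α : Type*} [MeasurableSpace α] {ν : Measure α} [IsProbabilityMeasure ν]
  {k : α → ℝ}

lemma integrable_sign (hk : Measurable k) (hks : ∀ h, k h = 1 ∨ k h = -1) :
    Integrable k ν :=
  integrable_of_bound hk.aestronglyMeasurable 1
    (Filter.Eventually.of_forall fun h => by rcases hks h with h1 | h1 <;> simp [h1])

lemma abs_integral_sign_le (hks : ∀ h, k h = 1 ∨ k h = -1) :
    |∫ h, k h ∂ν| ≤ 1 := by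
  have h1 : ∀ h, ‖k h‖ = (1 : ℝ) := fun h => by rcases hks h with h1 | h1 <;> simp [h1]
  calc |∫ h, k h ∂ν| ≤ ∫ h, ‖k h‖ ∂ν := by
        simpa [Real.norm_eq_abs] using norm_integral_le_integral_norm k (μ := ν)
    _ = 1 := by rw [integral_congr_ae (Filter.Eventually.of_forall h1)]; simp

lemma integral_affine (hk : Integrable k ν) (y : ℝ) :
    ∫ h, (1 - k h * y) / 2 ∂ν = (1 - (∫ h, k h ∂ν) * y) / 2 := by
  have : ∀ h, (1 - k h * y) / 2 = 1 / 2 - (y / 2) * k h := fun h => by ring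
  rw [integral_congr_ae (Filter.Eventually.of_forall this),
    integral_sub (integrable_const _) (hk.const_mul _), integral_const_mul, integral_const]
  simp; ring

lemma integral_zoLoss (hkm : Measurable k) (hks : ∀ h, k h = 1 ∨ k h = -1)
    {y : ℝ} (hy : y = 1 ∨ y = -1) :
    ∫ h, zoLoss (k h) y ∂ν = (1 - (∫ h, k h ∂ν) * y) / 2 := by
  rw [integral_congr_ae (Filter.Eventually.of_forall fun h => zoLoss_eq (hks h) hy)]
  exact integral_affine (integrable_sign hkm hks) y

lemma integral_integral_zoLoss (hkm : Measurable k) (hks : ∀ h, k h = 1 ∨ k h = -1) :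
    ∫ h, (∫ h', zoLoss (k h) (k h') ∂ν) ∂ν = (1 - (∫ h, k h ∂ν) ^ 2) / 2 := by
  have inner : ∀ h, ∫ h', zoLoss (k h) (k h') ∂ν = (1 - (∫ h', k h' ∂ν) * k h) / 2 := by
    intro h
    rw [integral_congr_ae (Filter.Eventually.of_forall fun h' => zoLoss_comm (k h) (k h'))]
    exact integral_zoLoss hkm hks (hks h)
  rw [integral_congr_ae (Filter.Eventually.of_forall inner)]
  have : ∀ a, (1 - (∫ h', k h' ∂ν) * k a) / 2 = (1 - k a * (∫ h', k h' ∂ν)) / 2 := fun a => by ring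
  rw [integral_congr_ae (Filter.Eventually.of_forall this),
    integral_affine (integrable_sign hkm hks) _]
  ring

end PerView

variable {V : ℕ} {X : Fin V → Type*} [∀ v, MeasurableSpace (X v)]
  {H : Fin V → Type*} [∀ v, MeasurableSpace (H v)]

/-- Multiview Gibbs risk `R_D(G_ρ)`. -/
def gibbsRisk (ev : ∀ v, H v → X v → ℝ) (D : Measure ((∀ v, X v) × ℝ))
    (Q : ∀ v, Measure (H v)) (ρ : Fin V → ℝ) : ℝ :=
  ∫ p, (∑ v, ρ v * ∫ h, zoLoss (ev v h (p.1 v)) p.2 ∂(Q v)) ∂D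

/-- View-specific Gibbs risk `R_D(G_{Q_v})`. -/
def gibbsRiskView (ev : ∀ v, H v → X v → ℝ) (D : Measure ((∀ v, X v) × ℝ))
    (Q : ∀ v, Measure (H v)) (v : Fin V) : ℝ :=
  ∫ p, (∫ h, zoLoss (ev v h (p.1 v)) p.2 ∂(Q v)) ∂D

/-- The multiview weighted majority vote `B_ρ`. -/
def majVote (ev : ∀ v, H v → X v → ℝ) (Q : ∀ v, Measure (H v)) (ρ : Fin V → ℝ)
    (x : ∀ v, X v) : ℝ :=
  Real.sign (∑ v, ρ v * ∫ h, ev v h (x v) ∂(Q v))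

/-- Risk of the multiview weighted majority vote `R_D(B_ρ)`. -/
def mvRisk (ev : ∀ v, H v → X v → ℝ) (D : Measure ((∀ v, X v) × ℝ))
    (Q : ∀ v, Measure (H v)) (ρ : Fin V → ℝ) : ℝ :=
  (D {p | majVote ev Q ρ p.1 ≠ p.2}).toReal

/-- View-specific expected disagreement `d_D(Q_v)` (over the marginal of `D` on `X`). -/
def disagreementView (ev : ∀ v, H v → X v → ℝ) (D : Measure ((∀ v, X v) × ℝ))
    (Q : ∀ v, Measure (H v)) (v : Fin V) : ℝ :=
  ∫ x, (∫ h, (∫ h', zoLoss (ev v h (x v)) (ev v h' (x v)) ∂(Q v)) ∂(Q v)) ∂(D.map Prod.fst)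

set_option maxHeartbeats 2000000 in
/-- **Multiview C-Bound (second form).** If `R_D(G_ρ) < 1/2`, then
`R_D(B_ρ) ≤ 1 - (1 - 2 E_{v∼ρ} R_D(G_{Q_v}))² / (1 - 2 E_{v∼ρ} d_D(Q_v))`. -/
theorem multiview_cbound_second_form
    (hV : 2 ≤ V)
    (ev : ∀ v, H v → X v → ℝ)
    (hmeas : ∀ v, Measurable (fun q : H v × X v => ev v q.1 q.2))
    (hsign : ∀ v h x, ev v h x = 1 ∨ ev v h x = -1)
    (D : Measure ((∀ v, X v) × ℝ)) [IsProbabilityMeasure D]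
    (hD : ∀ᵐ p ∂D, p.2 = 1 ∨ p.2 = -1)
    (Q : ∀ v, Measure (H v)) [∀ v, IsProbabilityMeasure (Q v)]
    (ρ : Fin V → ℝ) (hρ0 : ∀ v, 0 ≤ ρ v) (hρ1 : ∑ v, ρ v = 1)
    (hgibbs : gibbsRisk ev D Q ρ < 1 / 2) :
    mvRisk ev D Q ρ ≤
      1 - (1 - 2 * ∑ v, ρ v * gibbsRiskView ev D Q v) ^ 2 /
        (1 - 2 * ∑ v, ρ v * disagreementView ev D Q v) := by
  classical
  -- the per-view average vote
  set F : Fin V → (∀ v, X v) → ℝ := fun v x => ∫ h, ev v h (x v) ∂(Q v) with hF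
  have hFmeas : ∀ v, Measurable (F v) := by
    intro v
    have hg : Measurable (fun q : (∀ v, X v) × H v => ev v q.2 (q.1 v)) :=
      (hmeas v).comp (measurable_snd.prodMk ((measurable_pi_apply v).comp measurable_fst))
    exact (hg.stronglyMeasurable.integral_prod_right').measurable
  have hFabs : ∀ v x, |F v x| ≤ 1 := fun v x =>
    abs_integral_sign_le (fun h => hsign v h (x v))
  -- the aggregated vote and margin
  set f : (∀ v, X v) → ℝ := fun x => ∑ v, ρ v * F v x with hf
  have hfmeas : Measurable f := Finset.measurable_sum _ fun v _ => (hFmeas v).const_mul _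
  have hfabs : ∀ x, |f x| ≤ 1 := by
    intro x
    calc |f x| ≤ ∑ v, |ρ v * F v x| := Finset.abs_sum_le_sum_abs _ _
      _ ≤ ∑ v, ρ v := Finset.sum_le_sum fun v _ => by
          rw [abs_mul, abs_of_nonneg (hρ0 v)]
          calc ρ v * |F v x| ≤ ρ v * 1 := by
                exact mul_le_mul_of_nonneg_left (hFabs v x) (hρ0 v)
            _ = ρ v := mul_one _
      _ = 1 := hρ1
  set m : ((∀ v, X v) × ℝ) → ℝ := fun p => p.2 * f p.1 with hm
  have hmmeas : Measurable m := measurable_snd.mul (hfmeas.comp measurable_fst)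
  have hmabs : ∀ᵐ p ∂D, |m p| ≤ 1 := by
    filter_upwards [hD] with p hp
    have := hfabs p.1
    rcases hp with h1 | h1 <;> simp [hm, h1, abs_mul] <;> simpa using this
  have hInt_m : Integrable m D := integrable_of_bound hmmeas.aestronglyMeasurable 1 hmabs
  have hInt_m2 : Integrable (fun p => m p ^ 2) D := by
    refine integrable_of_bound (hmmeas.pow_const 2).aestronglyMeasurable 1 ?_
    filter_upwards [hmabs] with p hp
    rw [abs_pow]
    calc |m p| ^ 2 ≤ 1 ^ 2 := pow_le_pow_left₀ (abs_nonneg _) hp 2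
      _ = 1 := one_pow 2
  -- per-view Gibbs integrand identity
  have hGv : ∀ v, ∀ᵐ p ∂D, (∫ h, zoLoss (ev v h (p.1 v)) p.2 ∂(Q v))
      = (1 - F v p.1 * p.2) / 2 := by
    intro v
    filter_upwards [hD] with p hp
    exact integral_zoLoss
      ((hmeas v).comp (measurable_id.prodMk measurable_const))
      (fun h => hsign v h (p.1 v)) hp
  have hNiceInt : ∀ v, Integrable (fun p : (∀ v, X v) × ℝ => (1 - F v p.1 * p.2) / 2) D := by
    intro v
    refine integrable_of_bound ?_ 1 ?_
    · exact (((((hFmeas v).comp measurable_fst).mul measurable_snd).const_sub 1).div_const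
        2).aestronglyMeasurable
    · filter_upwards [hD] with p hp
      have h2 := hFabs v p.1
      rcases hp with h1 | h1 <;> rw [h1] <;> rw [abs_div] <;> rw [abs_of_nonneg (by norm_num : (0:ℝ) ≤ 2)] <;>
        rw [div_le_iff₀ (by norm_num : (0:ℝ) < 2)] <;>
        cases' abs_le.mp h2 with ha hb <;> rw [abs_le] <;> constructor <;> nlinarith
  have hIntView : ∀ v, Integrable (fun p : (∀ v, X v) × ℝ =>
      ∫ h, zoLoss (ev v h (p.1 v)) p.2 ∂(Q v)) D := fun v =>
    (hNiceInt v).congr ((hGv v).mono fun p hp => hp.symm)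
  -- Gibbs risk in terms of the margin
  have hsum_ae : ∀ᵐ p ∂D, (∑ v, ρ v * ∫ h, zoLoss (ev v h (p.1 v)) p.2 ∂(Q v))
      = (1 - m p) / 2 := by
    have hall : ∀ᵐ p ∂D, ∀ v, (∫ h, zoLoss (ev v h (p.1 v)) p.2 ∂(Q v))
        = (1 - F v p.1 * p.2) / 2 := (MeasureTheory.ae_all_iff).mpr hGv
    filter_upwards [hall] with p hp
    rw [Finset.sum_congr rfl fun v _ => by rw [hp v]]
    have : ∑ v, ρ v * ((1 - F v p.1 * p.2) / 2)
        = (∑ v, ρ v) / 2 - p.2 * (∑ v, ρ v * F v p.1) / 2 := by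
      rw [Finset.mul_sum, Finset.sum_div, Finset.sum_div, ← Finset.sum_sub_distrib]
      exact Finset.sum_congr rfl fun v _ => by ring
    rw [this, hρ1, hm, hf]
    ring
  have hgibbs_eq : gibbsRisk ev D Q ρ = (1 - ∫ p, m p ∂D) / 2 := by
    rw [gibbsRisk, integral_congr_ae hsum_ae]
    have : ∀ p : (∀ v, X v) × ℝ, (1 - m p) / 2 = 1 / 2 - (1 / 2) * m p := fun p => by ring
    rw [integral_congr_ae (Filter.Eventually.of_forall this),
      integral_sub (integrable_const _) (hInt_m.const_mul _), integral_const_mul, integral_const]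
    simp; ring
  have hmu_pos : 0 < ∫ p, m p ∂D := by
    by_contra h
    push_neg at h
    rw [hgibbs_eq] at hgibbs
    linarith
  -- sum of view Gibbs risks equals the Gibbs risk
  have hsumG : ∑ v, ρ v * gibbsRiskView ev D Q v = gibbsRisk ev D Q ρ := by
    rw [gibbsRisk]
    rw [integral_finset_sum _ (fun v _ => ((hIntView v).const_mul (ρ v)))]
    exact Finset.sum_congr rfl fun v _ => by rw [integral_const_mul, gibbsRiskView]
  -- disagreement in terms of F
  have hdis : ∀ v, disagreementView ev D Q v = ∫ p, (1 - F v p.1 ^ 2) / 2 ∂D := by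
    intro v
    have hinner : ∀ x : ∀ v, X v,
        (∫ h, (∫ h', zoLoss (ev v h (x v)) (ev v h' (x v)) ∂(Q v)) ∂(Q v))
        = (1 - F v x ^ 2) / 2 := fun x =>
      integral_integral_zoLoss ((hmeas v).comp (measurable_id.prodMk measurable_const))
        (fun h => hsign v h (x v))
    rw [disagreementView, integral_congr_ae (Filter.Eventually.of_forall hinner),
      integral_map measurable_fst.aemeasurable]
    exact ((((hFmeas v).pow_const 2).const_sub 1).div_const 2).aestronglyMeasurable
  have hIntF2 : ∀ v, Integrable (fun p : (∀ v, X v) × ℝ => (1 - F v p.1 ^ 2) / 2) D := by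
    intro v
    refine integrable_of_bound
      (((((hFmeas v).comp measurable_fst).pow_const 2).const_sub 1).div_const
        2).aestronglyMeasurable 1 (Filter.Eventually.of_forall fun p => ?_)
    have h2 := abs_le.mp (hFabs v p.1)
    rw [abs_div, abs_of_nonneg (by norm_num : (0:ℝ) ≤ 2), div_le_iff₀ (by norm_num : (0:ℝ) < 2),
      abs_le]
    constructor <;> nlinarith [sq_nonneg (F v p.1)]
  -- the second-moment quantity
  set g : ((∀ v, X v) × ℝ) → ℝ := fun p => ∑ v, ρ v * F v p.1 ^ 2 with hg
  have hgmeas : Measurable g :=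
    Finset.measurable_sum _ fun v _ => (((hFmeas v).comp measurable_fst).pow_const 2).const_mul _
  have hgabs : ∀ p, |g p| ≤ 1 := by
    intro p
    calc |g p| ≤ ∑ v, |ρ v * F v p.1 ^ 2| := Finset.abs_sum_le_sum_abs _ _
      _ ≤ ∑ v, ρ v := Finset.sum_le_sum fun v _ => by
          rw [abs_mul, abs_of_nonneg (hρ0 v), abs_pow]
          calc ρ v * |F v p.1| ^ 2 ≤ ρ v * 1 ^ 2 :=
                mul_le_mul_of_nonneg_left (pow_le_pow_left₀ (abs_nonneg _) (hFabs v p.1) 2) (hρ0 v)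
            _ = ρ v := by ring
      _ = 1 := hρ1
  have hInt_g : Integrable g D :=
    integrable_of_bound hgmeas.aestronglyMeasurable 1 (Filter.Eventually.of_forall hgabs)
  have hsumd : 1 - 2 * ∑ v, ρ v * disagreementView ev D Q v = ∫ p, g p ∂D := by
    have h1 : ∑ v, ρ v * disagreementView ev D Q v
        = ∫ p, ∑ v, ρ v * ((1 - F v p.1 ^ 2) / 2) ∂D := by
      rw [integral_finset_sum _ (fun v _ => (hIntF2 v).const_mul (ρ v))]
      exact Finset.sum_congr rfl fun v _ => by rw [integral_const_mul, hdis v]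
    have h2 : ∀ p : (∀ v, X v) × ℝ, ∑ v, ρ v * ((1 - F v p.1 ^ 2) / 2) = 1 / 2 - (1 / 2) * g p := by
      intro p
      have : ∑ v, ρ v * ((1 - F v p.1 ^ 2) / 2)
          = (∑ v, ρ v) / 2 - (∑ v, ρ v * F v p.1 ^ 2) / 2 := by
        rw [Finset.sum_div, Finset.sum_div, ← Finset.sum_sub_distrib]
        exact Finset.sum_congr rfl fun v _ => by ring
      rw [this, hρ1, hg]
      ring
    rw [h1, integral_congr_ae (Filter.Eventually.of_forall h2),
      integral_sub (integrable_const _) (hInt_g.const_mul _), integral_const_mul, integral_const]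
    simp
    ring
  -- second moment of the margin is at most ∫ g
  have hm2_le : ∫ p, m p ^ 2 ∂D ≤ ∫ p, g p ∂D := by
    refine integral_mono_ae hInt_m2 hInt_g ?_
    filter_upwards [hD] with p hp
    have hsq : m p ^ 2 = f p.1 ^ 2 := by
      rcases hp with h1 | h1 <;> simp [hm, h1] <;> ring
    rw [hsq]
    have hcs : (∑ v, Real.sqrt (ρ v) * (Real.sqrt (ρ v) * F v p.1)) ^ 2
        ≤ (∑ v, Real.sqrt (ρ v) ^ 2) * ∑ v, (Real.sqrt (ρ v) * F v p.1) ^ 2 :=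
      Finset.sum_mul_sq_le_sq_mul_sq _ _ _
    have e1 : ∀ v : Fin V, Real.sqrt (ρ v) * (Real.sqrt (ρ v) * F v p.1) = ρ v * F v p.1 := by
      intro v
      rw [← mul_assoc, Real.mul_self_sqrt (hρ0 v)]
    have e2 : ∀ v : Fin V, Real.sqrt (ρ v) ^ 2 = ρ v := fun v => Real.sq_sqrt (hρ0 v)
    have e3 : ∀ v : Fin V, (Real.sqrt (ρ v) * F v p.1) ^ 2 = ρ v * F v p.1 ^ 2 := by
      intro v
      rw [mul_pow, e2 v]
    rw [Finset.sum_congr rfl fun v _ => e1 v, Finset.sum_congr rfl fun v _ => e2 v,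
      Finset.sum_congr rfl fun v _ => e3 v, hρ1, one_mul] at hcs
    exact hcs
  -- Cantelli / Chebyshev-Cantelli step
  set A : Set ((∀ v, X v) × ℝ) := {p | 0 < m p} with hA
  have hAmeas : MeasurableSet A := measurableSet_lt measurable_const hmmeas
  set I : ((∀ v, X v) × ℝ) → ℝ := fun p => if 0 < m p then 1 else 0 with hI
  have hImeas : Measurable I := Measurable.ite hAmeas measurable_const measurable_const
  have hI01 : ∀ p, I p = 0 ∨ I p = 1 := by
    intro p
    by_cases h : 0 < m p <;> simp [hI, h]
  have hInonneg : ∀ p, 0 ≤ I p := by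
    intro p
    rcases hI01 p with h | h <;> rw [h] <;> norm_num
  have hIle : ∀ p, I p ≤ 1 := by
    intro p
    rcases hI01 p with h | h <;> rw [h] <;> norm_num
  have hIsq : ∀ p, I p * I p = I p := by
    intro p
    rcases hI01 p with h | h <;> rw [h] <;> norm_num
  have hint_I : Integrable I D := integrable_of_bound hImeas.aestronglyMeasurable 1
    (Filter.Eventually.of_forall fun p => by rw [abs_of_nonneg (hInonneg p)]; exact hIle p)
  have hint_mI : Integrable (fun p => m p * I p) D := by
    refine integrable_of_bound (hmmeas.mul hImeas).aestronglyMeasurable 1 ?_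
    filter_upwards [hmabs] with p hp
    rw [abs_mul]
    calc |m p| * |I p| ≤ 1 * 1 :=
          mul_le_mul hp (by rw [abs_of_nonneg (hInonneg p)]; exact hIle p) (abs_nonneg _)
            zero_le_one
      _ = 1 := one_mul 1
  have hint_m2I : Integrable (fun p => m p ^ 2 * I p) D := by
    refine integrable_of_bound ((hmmeas.pow_const 2).mul hImeas).aestronglyMeasurable 1 ?_
    filter_upwards [hmabs] with p hp
    rw [abs_mul, abs_pow]
    calc |m p| ^ 2 * |I p| ≤ 1 ^ 2 * 1 := by
          refine mul_le_mul (pow_le_pow_left₀ (abs_nonneg _) hp 2) ?_ (abs_nonneg _) (by norm_num)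
          rw [abs_of_nonneg (hInonneg p)]; exact hIle p
      _ = 1 := by norm_num
  -- the quadratic in t is nonnegative
  have hquad : ∀ t : ℝ, 0 ≤ (∫ p, I p ∂D) * (t * t) + (-(2 * ∫ p, m p * I p ∂D)) * t
      + ∫ p, m p ^ 2 * I p ∂D := by
    intro t
    have hnn : 0 ≤ ∫ p, (m p - t) ^ 2 * I p ∂D :=
      integral_nonneg fun p => mul_nonneg (sq_nonneg _) (hInonneg p)
    have hexp : ∀ p : (∀ v, X v) × ℝ, (m p - t) ^ 2 * I p
        = m p ^ 2 * I p - (2 * t) * (m p * I p) + (t * t) * I p := fun p => by ring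
    rw [integral_congr_ae (Filter.Eventually.of_forall hexp)] at hnn
    have i1 : Integrable (fun p => m p ^ 2 * I p - 2 * t * (m p * I p)) D :=
      hint_m2I.sub (hint_mI.const_mul _)
    have i2 : Integrable (fun p => t * t * I p) D := hint_I.const_mul _
    rw [integral_add i1 i2, integral_sub hint_m2I (hint_mI.const_mul _),
      integral_const_mul, integral_const_mul] at hnn
    linarith
  have hdisc := discrim_le_zero hquad
  rw [discrim] at hdisc
  -- abbreviations
  set a : ℝ := ∫ p, m p * I p ∂D with ha
  set P : ℝ := ∫ p, I p ∂D with hP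
  set C : ℝ := ∫ p, m p ^ 2 * I p ∂D with hCdef
  set E2 : ℝ := ∫ p, m p ^ 2 ∂D with hE2
  set mu : ℝ := ∫ p, m p ∂D with hmu
  have hsq_le : a ^ 2 ≤ P * C := by nlinarith [hdisc]
  have ha_ge : mu ≤ a := by
    refine integral_mono_ae hInt_m hint_mI (Filter.Eventually.of_forall fun p => ?_)
    by_cases h : 0 < m p
    · simp [hI, h]
    · push_neg at h
      simp only [hI, if_neg (not_lt.mpr h), mul_zero]
      exact h
  have hC_le : C ≤ E2 := by
    refine integral_mono_ae hint_m2I hInt_m2 (Filter.Eventually.of_forall fun p => ?_)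
    calc m p ^ 2 * I p ≤ m p ^ 2 * 1 :=
          mul_le_mul_of_nonneg_left (hIle p) (sq_nonneg _)
      _ = m p ^ 2 := mul_one _
  have hP_nonneg : 0 ≤ P := integral_nonneg hInonneg
  have hP_le_one : P ≤ 1 := by
    have := integral_mono_ae hint_I (integrable_const 1)
      (Filter.Eventually.of_forall fun p => hIle p)
    simpa using this
  have hmu2_le : mu ^ 2 ≤ P * E2 := by
    have h1 : mu ^ 2 ≤ a ^ 2 := by nlinarith
    have h2 : P * C ≤ P * E2 := mul_le_mul_of_nonneg_left hC_le hP_nonneg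
    linarith
  have hE2_pos : 0 < E2 := by nlinarith
  have hP_ge : mu ^ 2 / E2 ≤ P := (div_le_iff₀ hE2_pos).mpr (by linarith [hmu2_le, mul_comm P E2])
  -- P is the probability of A
  have hIind : I = A.indicator (fun _ => (1 : ℝ)) := by
    funext p
    by_cases h : 0 < m p <;> simp [hI, hA, Set.indicator_apply, h]
  have hP_eq : P = (D A).toReal := by
    rw [hP, hIind]
    exact (integral_indicator_one (μ := D) hAmeas).trans (measureReal_def _ _)
  -- the majority vote errs only when the margin is nonpositive
  have hrisk : mvRisk ev D Q ρ ≤ 1 - P := by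
    have hsub : D {p | majVote ev Q ρ p.1 ≠ p.2} ≤ D Aᶜ := by
      refine measure_mono_ae ?_
      filter_upwards [hD] with p hp
      intro hpe (h0 : 0 < m p)
      have hfp : majVote ev Q ρ p.1 = Real.sign (f p.1) := rfl
      rcases hp with h1 | h1
      · have hmp : m p = f p.1 := by simp only [hm]; rw [h1, one_mul]
        rw [hmp] at h0
        exact hpe (by rw [hfp, Real.sign_of_pos h0, h1])
      · have hmp : m p = -f p.1 := by simp only [hm]; rw [h1]; ring
        rw [hmp] at h0
        have hfneg : f p.1 < 0 := by linarith
        exact hpe (by rw [hfp, Real.sign_of_neg hfneg, h1])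
    have hcompl : (D Aᶜ).toReal = 1 - P := by
      rw [prob_compl_eq_one_sub hAmeas, ENNReal.toReal_sub_of_le prob_le_one ENNReal.one_ne_top,
        ENNReal.toReal_one, hP_eq]
    calc mvRisk ev D Q ρ ≤ (D Aᶜ).toReal :=
          ENNReal.toReal_mono (measure_ne_top D _) hsub
      _ = 1 - P := hcompl
  -- final assembly
  have hnum : 1 - 2 * ∑ v, ρ v * gibbsRiskView ev D Q v = mu := by
    rw [hsumG, hgibbs_eq]
    ring
  have hG_pos : 0 < ∫ p, g p ∂D := lt_of_lt_of_le hE2_pos hm2_le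
  have hdiv : mu ^ 2 / (∫ p, g p ∂D) ≤ mu ^ 2 / E2 :=
    div_le_div_of_nonneg_left (sq_nonneg mu) hE2_pos hm2_le
  rw [hnum, hsumd]
  linarith [hP_ge, hdiv, hrisk]

end
end

section
/- (Change of measure inequality for a two-level hierarchy.) For any set of prior distributions P_1,…,P_V over the voter sets H_1,…,H_V and any set of posterior distributions Q_1,…,Q_V over H_1,…,H_V (with each Q_v absolutely continuous with respect to P_v), for any hyper-prior distribution π and hyper-posterior distribution ρ over the views {1,…,V} (with ρ absolutely continuous with respect to π), and for any measurable function φ : H_v → ℝ (one such function per view, with the relevant expectations finite), one has E_{v∼ρ} E_{h∼Q_v} φ(h) ≤ E_{v∼ρ} KL(Q_v‖P_v) + KL(ρ‖π) + ln( E_{v∼π} E_{h∼P_v} e^{φ(h)} ). -/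
open MeasureTheory

noncomputable section

/-- Kullback-Leibler divergence `KL(Q‖P) = E_{h∼Q} ln(dQ/dP)` (real-valued;
finiteness is assumed via integrability hypotheses). -/
def klReal {α : Type*} [MeasurableSpace α] (Q P : Measure α) : ℝ :=
  ∫ a, Real.log ((Q.rnDeriv P a).toReal) ∂Q

/-- Single-level change of measure inequality. -/
lemma change_of_measure_single {α : Type*} [MeasurableSpace α]
    (P Q : Measure α) [IsProbabilityMeasure P] [IsProbabilityMeasure Q]
    (hQP : Q ≪ P) (φ : α → ℝ) (hφmeas : Measurable φ)
    (hφint : Integrable φ Q)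
    (hφexp : Integrable (fun h => Real.exp (φ h)) P)
    (hklint : Integrable (fun h => Real.log ((Q.rnDeriv P h).toReal)) Q) :
    ∫ h, φ h ∂Q ≤ klReal Q P + Real.log (∫ h, Real.exp (φ h) ∂P) := by
  set f : α → ℝ := fun x => (Q.rnDeriv P x).toReal with hf
  set Z : ℝ := ∫ h, Real.exp (φ h) ∂P with hZ
  have hZpos : 0 < Z := by
    rw [hZ]
    refine (integral_pos_iff_support_of_nonneg (fun x => (Real.exp_pos _).le) hφexp).mpr ?_
    have : (Function.support fun h => Real.exp (φ h)) = Set.univ := by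
      ext x; simp [Function.support, (Real.exp_pos (φ x)).ne']
    rw [this]
    simp
  have hg : Measurable (fun x => Real.exp (φ x) / f x) :=
    (Real.measurable_exp.comp hφmeas).div (Measure.measurable_rnDeriv Q P).ennreal_toReal
  have hnn : ∀ x, 0 ≤ Real.exp (φ x) / f x := fun x =>
    div_nonneg (Real.exp_pos _).le ENNReal.toReal_nonneg
  -- key lintegral bound
  have hlint : ∫⁻ x, ENNReal.ofReal (Real.exp (φ x) / f x) ∂Q ≤ ENNReal.ofReal Z := by
    conv_lhs => rw [← Measure.withDensity_rnDeriv_eq Q P hQP]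
    rw [lintegral_withDensity_eq_lintegral_mul _ (Measure.measurable_rnDeriv Q P)
      hg.ennreal_ofReal]
    have hle : ∫⁻ x, (Q.rnDeriv P * fun x => ENNReal.ofReal (Real.exp (φ x) / f x)) x ∂P
        ≤ ∫⁻ x, ENNReal.ofReal (Real.exp (φ x)) ∂P := by
      refine lintegral_mono_ae ?_
      filter_upwards [Measure.rnDeriv_lt_top Q P] with x hx
      simp only [Pi.mul_apply]
      rcases eq_or_ne (Q.rnDeriv P x) 0 with h0 | h0
      · have : f x = 0 := by simp [hf, h0]
        simp [this, h0]
      · have hfx : 0 < f x := ENNReal.toReal_pos h0 hx.ne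
        have : Q.rnDeriv P x = ENNReal.ofReal (f x) := by
          rw [hf]; exact (ENNReal.ofReal_toReal hx.ne).symm
        rw [this, ← ENNReal.ofReal_mul hfx.le, mul_div_cancel₀ _ hfx.ne']
    refine hle.trans_eq ?_
    rw [← ofReal_integral_eq_lintegral_ofReal hφexp
      (ae_of_all _ fun x => (Real.exp_pos _).le)]
  have hw_int : Integrable (fun x => Real.exp (φ x) / f x) Q := by
    refine ⟨hg.aestronglyMeasurable, ?_⟩
    rw [hasFiniteIntegral_iff_ofReal (ae_of_all _ hnn)]
    exact lt_of_le_of_lt hlint ENNReal.ofReal_lt_top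
  have hw_le : ∫ x, Real.exp (φ x) / f x ∂Q ≤ Z := by
    rw [integral_eq_lintegral_of_nonneg_ae (ae_of_all _ hnn) hg.aestronglyMeasurable]
    calc (∫⁻ x, ENNReal.ofReal (Real.exp (φ x) / f x) ∂Q).toReal
        ≤ (ENNReal.ofReal Z).toReal := ENNReal.toReal_mono ENNReal.ofReal_ne_top hlint
      _ = Z := ENNReal.toReal_ofReal hZpos.le
  have hpos : ∀ᵐ x ∂Q, 0 < f x := by
    filter_upwards [Measure.rnDeriv_pos hQP, hQP.ae_le (Measure.rnDeriv_lt_top Q P)]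
      with x h1 h2
    exact ENNReal.toReal_pos h1.ne' h2.ne
  have key : ∫ x, (φ x - Real.log (f x) - Real.log Z) ∂Q ≤ 0 := by
    have hub : Integrable (fun x => Real.exp (φ x) / f x / Z - 1) Q :=
      (hw_int.div_const Z).sub (integrable_const 1)
    have hmono : ∫ x, (φ x - Real.log (f x) - Real.log Z) ∂Q
        ≤ ∫ x, (Real.exp (φ x) / f x / Z - 1) ∂Q := by
      refine integral_mono_ae ((hφint.sub hklint).sub (integrable_const _)) hub ?_
      filter_upwards [hpos] with x hx
      have hwpos : 0 < Real.exp (φ x) / f x / Z :=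
        div_pos (div_pos (Real.exp_pos _) hx) hZpos
      have heq : Real.log (Real.exp (φ x) / f x / Z)
          = φ x - Real.log (f x) - Real.log Z := by
        rw [Real.log_div (by positivity) hZpos.ne',
          Real.log_div (Real.exp_ne_zero _) hx.ne', Real.log_exp]
      calc φ x - Real.log (f x) - Real.log Z
          = Real.log (Real.exp (φ x) / f x / Z) := heq.symm
        _ ≤ Real.exp (φ x) / f x / Z - 1 := Real.log_le_sub_one_of_pos hwpos
    have hcalc : ∫ x, (Real.exp (φ x) / f x / Z - 1) ∂Q
        = (∫ x, Real.exp (φ x) / f x ∂Q) / Z - 1 := by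
      rw [integral_sub (hw_int.div_const Z) (integrable_const 1), integral_div,
        integral_const]
      simp
    have : (∫ x, Real.exp (φ x) / f x ∂Q) / Z ≤ 1 :=
      (div_le_one hZpos).mpr hw_le
    linarith [hmono, hcalc ▸ hmono]
  have hsplit : ∫ x, (φ x - Real.log (f x) - Real.log Z) ∂Q
      = ∫ x, φ x ∂Q - klReal Q P - Real.log Z := by
    have h1 : Integrable (fun x => φ x - Real.log (f x)) Q := hφint.sub hklint
    rw [integral_sub h1 (integrable_const _), integral_sub hφint hklint, integral_const]
    simp [klReal, hf]
  rw [hsplit] at key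
  linarith

/-- **Change of measure inequality for a two-level hierarchy.**
`E_{v∼ρ} E_{h∼Q_v} φ_v(h) ≤ E_{v∼ρ} KL(Q_v‖P_v) + KL(ρ‖π) + ln(E_{v∼π} E_{h∼P_v} e^{φ_v(h)})`. -/
theorem change_of_measure_two_level
    {V : ℕ} (hV : 2 ≤ V)
    {H : Fin V → Type*} [∀ v, MeasurableSpace (H v)]
    (P Q : ∀ v, Measure (H v))
    [∀ v, IsProbabilityMeasure (P v)] [∀ v, IsProbabilityMeasure (Q v)]
    (hQP : ∀ v, Q v ≪ P v)
    (π ρ : Fin V → ℝ)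
    (hπ0 : ∀ v, 0 ≤ π v) (hπ1 : ∑ v, π v = 1)
    (hρ0 : ∀ v, 0 ≤ ρ v) (hρ1 : ∑ v, ρ v = 1)
    (hρπ : ∀ v, π v = 0 → ρ v = 0)
    (φ : ∀ v, H v → ℝ)
    (hφmeas : ∀ v, Measurable (φ v))
    (hφint : ∀ v, Integrable (φ v) (Q v))
    (hφexp : ∀ v, Integrable (fun h => Real.exp (φ v h)) (P v))
    (hklint : ∀ v, Integrable (fun h => Real.log (((Q v).rnDeriv (P v) h).toReal)) (Q v)) :
    ∑ v, ρ v * ∫ h, φ v h ∂(Q v) ≤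
      (∑ v, ρ v * klReal (Q v) (P v)) + (∑ v, ρ v * Real.log (ρ v / π v)) +
        Real.log (∑ v, π v * ∫ h, Real.exp (φ v h) ∂(P v)) := by
  set Z : Fin V → ℝ := fun v => ∫ h, Real.exp (φ v h) ∂(P v) with hZdef
  have hZpos : ∀ v, 0 < Z v := by
    intro v
    refine (integral_pos_iff_support_of_nonneg (fun x => (Real.exp_pos _).le)
      (hφexp v)).mpr ?_
    have : (Function.support fun h => Real.exp (φ v h)) = Set.univ := by
      ext x; simp [Function.support, (Real.exp_pos (φ v x)).ne']
    rw [this]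
    simp
  -- Step 1: apply single-level change of measure per view
  have step1 : ∑ v, ρ v * ∫ h, φ v h ∂(Q v)
      ≤ ∑ v, ρ v * (klReal (Q v) (P v) + Real.log (Z v)) := by
    refine Finset.sum_le_sum fun v _ => mul_le_mul_of_nonneg_left ?_ (hρ0 v)
    exact change_of_measure_single (P v) (Q v) (hQP v) (φ v) (hφmeas v) (hφint v)
      (hφexp v) (hklint v)
  -- Step 2: discrete change of measure
  set S : Finset (Fin V) := Finset.univ.filter (fun v => ρ v ≠ 0) with hSdef
  have hρS : ∀ v ∈ S, 0 < ρ v := by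
    intro v hv
    rw [hSdef, Finset.mem_filter] at hv
    exact lt_of_le_of_ne (hρ0 v) (Ne.symm hv.2)
  have hπS : ∀ v ∈ S, 0 < π v := by
    intro v hv
    rw [hSdef, Finset.mem_filter] at hv
    refine lt_of_le_of_ne (hπ0 v) fun h => hv.2 (hρπ v h.symm)
  have hsumS : ∀ (x : Fin V → ℝ), ∑ v ∈ S, ρ v * x v = ∑ v, ρ v * x v := by
    intro x
    refine Finset.sum_subset (Finset.filter_subset _ _) fun v _ hv => ?_
    rw [hSdef, Finset.mem_filter] at hv
    push_neg at hv
    rw [hv (Finset.mem_univ v), zero_mul]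
  have hsumρ : ∑ v ∈ S, ρ v = 1 := by
    have := hsumS (fun _ => 1)
    simpa [hρ1] using this
  have hSne : 0 < ∑ v ∈ S, π v * Z v := by
    have hex : ∃ v, ρ v ≠ 0 := by
      by_contra h
      push_neg at h
      rw [Finset.sum_congr rfl (fun v _ => h v)] at hρ1
      simp at hρ1
    obtain ⟨v, hv⟩ := hex
    have hvS : v ∈ S := by rw [hSdef, Finset.mem_filter]; exact ⟨Finset.mem_univ v, hv⟩
    refine Finset.sum_pos (fun w hw => mul_pos (hπS w hw) (hZpos w)) ⟨v, hvS⟩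
  have jensen : ∑ v ∈ S, ρ v * Real.log (π v * Z v / ρ v)
      ≤ Real.log (∑ v ∈ S, π v * Z v) := by
    have h := (strictConcaveOn_log_Ioi.concaveOn).le_map_sum
      (t := S) (w := ρ) (p := fun v => π v * Z v / ρ v)
      (fun v hv => (hρS v hv).le) hsumρ
      (fun v hv => Set.mem_Ioi.mpr (div_pos (mul_pos (hπS v hv) (hZpos v)) (hρS v hv)))
    simp only [smul_eq_mul] at h
    have hrw : ∑ v ∈ S, ρ v * (π v * Z v / ρ v) = ∑ v ∈ S, π v * Z v := by
      refine Finset.sum_congr rfl fun v hv => ?_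
      field_simp
      rw [mul_assoc]
      exact mul_div_cancel_left₀ _ (hρS v hv).ne'
    rw [hrw] at h
    exact h
  have hdecomp : ∀ v ∈ S, Real.log (Z v)
      = Real.log (ρ v / π v) + Real.log (π v * Z v / ρ v) := by
    intro v hv
    rw [← Real.log_mul (div_pos (hρS v hv) (hπS v hv)).ne'
      (div_pos (mul_pos (hπS v hv) (hZpos v)) (hρS v hv)).ne']
    congr 1
    have h1 : ρ v / π v * (π v * Z v / ρ v) = Z v * (ρ v / ρ v) * (π v / π v) := by
      ring
    rw [h1, div_self (hρS v hv).ne', div_self (hπS v hv).ne', mul_one, mul_one]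
  have step2 : ∑ v, ρ v * Real.log (Z v)
      ≤ ∑ v, ρ v * Real.log (ρ v / π v) + Real.log (∑ v, π v * Z v) := by
    calc ∑ v, ρ v * Real.log (Z v) = ∑ v ∈ S, ρ v * Real.log (Z v) :=
          (hsumS _).symm
      _ = ∑ v ∈ S, (ρ v * Real.log (ρ v / π v) + ρ v * Real.log (π v * Z v / ρ v)) := by
          refine Finset.sum_congr rfl fun v hv => ?_
          rw [hdecomp v hv, mul_add]
      _ = ∑ v ∈ S, ρ v * Real.log (ρ v / π v)
            + ∑ v ∈ S, ρ v * Real.log (π v * Z v / ρ v) := Finset.sum_add_distrib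
      _ ≤ ∑ v ∈ S, ρ v * Real.log (ρ v / π v) + Real.log (∑ v ∈ S, π v * Z v) := by
          linarith [jensen]
      _ ≤ ∑ v, ρ v * Real.log (ρ v / π v) + Real.log (∑ v, π v * Z v) := by
          rw [hsumS (fun v => Real.log (ρ v / π v))]
          have hle : ∑ v ∈ S, π v * Z v ≤ ∑ v, π v * Z v := by
            refine Finset.sum_le_sum_of_subset_of_nonneg (Finset.filter_subset _ _)
              fun v _ _ => mul_nonneg (hπ0 v) (hZpos v).le
          exact add_le_add_right (Real.log_le_log hSne hle) _
  calc ∑ v, ρ v * ∫ h, φ v h ∂(Q v)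
      ≤ ∑ v, ρ v * (klReal (Q v) (P v) + Real.log (Z v)) := step1
    _ = ∑ v, ρ v * klReal (Q v) (P v) + ∑ v, ρ v * Real.log (Z v) := by
        rw [← Finset.sum_add_distrib]
        exact Finset.sum_congr rfl fun v _ => mul_add _ _ _
    _ ≤ ∑ v, ρ v * klReal (Q v) (P v)
          + (∑ v, ρ v * Real.log (ρ v / π v) + Real.log (∑ v, π v * Z v)) :=
        add_le_add_right step2 _
    _ = (∑ v, ρ v * klReal (Q v) (P v)) + (∑ v, ρ v * Real.log (ρ v / π v))
          + Real.log (∑ v, π v * Z v) := by ring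

end
end

section
/- (Margin form of the C-bound.) If the first moment of the margin satisfies μ₁(M_ρ^D) > 0, then the risk of the multiview weighted majority vote satisfies R_D(B_ρ) = P_{(x,y)∼D}(M_ρ(x,y) ≤ 0) ≤ Var(M_ρ^D) / (Var(M_ρ^D) + μ₁(M_ρ^D)²) = 1 − μ₁(M_ρ^D)² / μ₂(M_ρ^D), where Var(M_ρ^D) = μ₂(M_ρ^D) − μ₁(M_ρ^D)². -/
open MeasureTheory

noncomputable section

variable {V : ℕ} {X : Fin V → Type*} [∀ v, MeasurableSpace (X v)]
  {H : Fin V → Type*} [∀ v, MeasurableSpace (H v)]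

/-- The margin `M_ρ(x,y) = E_{v∼ρ} E_{h∼Q_v} y·h(x^v)` of the multiview majority vote. -/
def margin (ev : ∀ v, H v → X v → ℝ) (Q : ∀ v, Measure (H v)) (ρ : Fin V → ℝ)
    (p : (∀ v, X v) × ℝ) : ℝ :=
  ∑ v, ρ v * ∫ h, p.2 * ev v h (p.1 v) ∂(Q v)

/-- First moment of the margin `μ₁(M_ρ^D)`. -/
def marginMoment1 (ev : ∀ v, H v → X v → ℝ) (D : Measure ((∀ v, X v) × ℝ))
    (Q : ∀ v, Measure (H v)) (ρ : Fin V → ℝ) : ℝ :=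
  ∫ p, margin ev Q ρ p ∂D

/-- Second moment of the margin `μ₂(M_ρ^D)`. -/
def marginMoment2 (ev : ∀ v, H v → X v → ℝ) (D : Measure ((∀ v, X v) × ℝ))
    (Q : ∀ v, Measure (H v)) (ρ : Fin V → ℝ) : ℝ :=
  ∫ p, (margin ev Q ρ p) ^ 2 ∂D

/-- Variance of the margin `Var(M_ρ^D) = μ₂(M_ρ^D) - μ₁(M_ρ^D)²`. -/
def marginVar (ev : ∀ v, H v → X v → ℝ) (D : Measure ((∀ v, X v) × ℝ))
    (Q : ∀ v, Measure (H v)) (ρ : Fin V → ℝ) : ℝ :=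
  marginMoment2 ev D Q ρ - (marginMoment1 ev D Q ρ) ^ 2

/-- **Margin form of the C-bound.** If `μ₁(M_ρ^D) > 0` then
`R_D(B_ρ) = P_{(x,y)∼D}(M_ρ(x,y) ≤ 0) ≤ Var(M_ρ^D)/(Var(M_ρ^D) + μ₁(M_ρ^D)²)
  = 1 - μ₁(M_ρ^D)²/μ₂(M_ρ^D)`. -/
theorem margin_form_cbound
    (hV : 2 ≤ V)
    (ev : ∀ v, H v → X v → ℝ)
    (hmeas : ∀ v, Measurable (fun q : H v × X v => ev v q.1 q.2))
    (hsign : ∀ v h x, ev v h x = 1 ∨ ev v h x = -1)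
    (D : Measure ((∀ v, X v) × ℝ)) [IsProbabilityMeasure D]
    (hD : ∀ᵐ p ∂D, p.2 = 1 ∨ p.2 = -1)
    (Q : ∀ v, Measure (H v)) [∀ v, IsProbabilityMeasure (Q v)]
    (ρ : Fin V → ℝ) (hρ0 : ∀ v, 0 ≤ ρ v) (hρ1 : ∑ v, ρ v = 1)
    (hμ1 : 0 < marginMoment1 ev D Q ρ) :
    mvRisk ev D Q ρ = (D {p | margin ev Q ρ p ≤ 0}).toReal ∧
    (D {p | margin ev Q ρ p ≤ 0}).toReal ≤
      marginVar ev D Q ρ / (marginVar ev D Q ρ + (marginMoment1 ev D Q ρ) ^ 2) ∧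
    marginVar ev D Q ρ / (marginVar ev D Q ρ + (marginMoment1 ev D Q ρ) ^ 2) =
      1 - (marginMoment1 ev D Q ρ) ^ 2 / marginMoment2 ev D Q ρ := by
  classical
  set g : ∀ v, X v → ℝ := fun v x => ∫ h, ev v h x ∂(Q v) with hgdef
  set S : (∀ v, X v) → ℝ := fun x => ∑ v, ρ v * g v (x v) with hSdef
  have hgmeas : ∀ v, StronglyMeasurable (g v) := fun v =>
    (hmeas v).stronglyMeasurable.integral_prod_left'
  have hSmeas : Measurable S := by
    apply Finset.measurable_sum
    intro v _
    exact measurable_const.mul ((hgmeas v).measurable.comp (measurable_pi_apply v))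
  have hgbd : ∀ v x, |g v x| ≤ 1 := by
    intro v x
    have := norm_integral_le_of_norm_le_const (μ := Q v) (f := fun h => ev v h x) (C := 1)
      (Filter.Eventually.of_forall fun h => by rcases hsign v h x with h1 | h1 <;> simp [h1])
    simpa using this
  have hSbd : ∀ x, |S x| ≤ 1 := by
    intro x
    calc |S x| ≤ ∑ v, |ρ v * g v (x v)| := Finset.abs_sum_le_sum_abs _ _
    _ ≤ ∑ v, ρ v := by
        refine Finset.sum_le_sum fun v _ => ?_
        rw [abs_mul, abs_of_nonneg (hρ0 v)]
        calc ρ v * |g v (x v)| ≤ ρ v * 1 := by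
              exact mul_le_mul_of_nonneg_left (hgbd v (x v)) (hρ0 v)
        _ = ρ v := mul_one _
    _ = 1 := hρ1
  have hmargin : ∀ p, margin ev Q ρ p = p.2 * S p.1 := by
    intro p
    simp only [margin, integral_const_mul, hSdef, hgdef, Finset.mul_sum]
    exact Finset.sum_congr rfl fun v _ => by ring
  have hmmeas : Measurable (margin ev Q ρ) := by
    have heq : margin ev Q ρ = fun p => p.2 * S p.1 := funext hmargin
    rw [heq]
    exact measurable_snd.mul (hSmeas.comp measurable_fst)
  have hmbd : ∀ᵐ p ∂D, |margin ev Q ρ p| ≤ 1 := by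
    filter_upwards [hD] with p hy
    rw [hmargin p, abs_mul]
    have h2 : |p.2| = 1 := by rcases hy with h | h <;> simp [h]
    rw [h2, one_mul]
    exact hSbd p.1
  have hint : Integrable (margin ev Q ρ) D := by
    refine ⟨hmmeas.aestronglyMeasurable, HasFiniteIntegral.of_bounded (C := 1) ?_⟩
    filter_upwards [hmbd] with p hp using by simpa using hp
  have hint2 : Integrable (fun p => margin ev Q ρ p ^ 2) D := by
    refine ⟨(hmmeas.pow_const 2).aestronglyMeasurable,
      HasFiniteIntegral.of_bounded (C := 1) ?_⟩
    filter_upwards [hmbd] with p hp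
    calc ‖margin ev Q ρ p ^ 2‖ = |margin ev Q ρ p| ^ 2 := by
          rw [Real.norm_eq_abs, abs_pow]
    _ ≤ 1 := pow_le_one₀ (abs_nonneg _) hp
  -- Part 1
  have ht : MeasurableSet {p : (∀ v, X v) × ℝ | margin ev Q ρ p ≤ 0} :=
    measurableSet_le hmmeas measurable_const
  have hpart1 : mvRisk ev D Q ρ = (D {p | margin ev Q ρ p ≤ 0}).toReal := by
    unfold mvRisk
    congr 1
    apply measure_congr
    apply Filter.eventuallyEq_set.2
    filter_upwards [hD] with p hy
    have hmaj : majVote ev Q ρ p.1 = Real.sign (S p.1) := rfl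
    simp only [Set.mem_setOf_eq, hmaj, hmargin p]
    rcases hy with h | h <;> rw [h] <;>
      rcases lt_trichotomy (S p.1) 0 with hS | hS | hS <;>
      simp [Real.sign_of_neg, Real.sign_of_pos, hS, Real.sign_zero] <;>
      constructor <;> intro hh <;> nlinarith
  -- abbreviations
  set t : Set ((∀ v, X v) × ℝ) := {p | margin ev Q ρ p ≤ 0} with htdef
  set f : ((∀ v, X v) × ℝ) → ℝ := fun p => max (margin ev Q ρ p) 0 with hfdef
  set gi : ((∀ v, X v) × ℝ) → ℝ := tᶜ.indicator (fun _ => 1) with hgidef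
  have hfmeas : Measurable f := hmmeas.max measurable_const
  have hgimeas : Measurable gi := measurable_const.indicator ht.compl
  have hfle : ∀ p, f p ≤ |margin ev Q ρ p| := fun p =>
    max_le (le_abs_self _) (abs_nonneg _)
  have hfbd : ∀ᵐ p ∂D, ‖f p‖ ≤ 1 := by
    filter_upwards [hmbd] with p hp
    rw [Real.norm_eq_abs, abs_of_nonneg (le_max_right _ _)]
    exact le_trans (hfle p) hp
  have hfmem : MemLp f (ENNReal.ofReal 2) D :=
    MemLp.of_bound hfmeas.aestronglyMeasurable 1 hfbd
  have hgimem : MemLp gi (ENNReal.ofReal 2) D := by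
    refine MemLp.of_bound hgimeas.aestronglyMeasurable 1
      (Filter.Eventually.of_forall fun p => ?_)
    rw [Real.norm_eq_abs]
    by_cases hp : p ∈ tᶜ <;> simp [hgidef, Set.indicator_apply, hp]
  have hpq : Real.HolderConjugate 2 2 := ⟨by norm_num, by norm_num, by norm_num⟩
  have hCS := integral_mul_le_Lp_mul_Lq_of_nonneg (μ := D) hpq
    (Filter.Eventually.of_forall fun p => le_max_right _ _)
    (Filter.Eventually.of_forall fun p =>
      Set.indicator_nonneg (fun _ _ => zero_le_one) p)
    hfmem hgimem
  have hrp : ∀ r : ℝ, r ^ (2:ℝ) = r ^ 2 := fun r => by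
    rw [show (2:ℝ) = ((2:ℕ):ℝ) by norm_num, Real.rpow_natCast]
  have hfg : ∀ p, f p * gi p = f p := by
    intro p
    by_cases hp : p ∈ t
    · have h0 : f p = 0 := max_eq_right hp
      simp [h0]
    · have h1 : gi p = 1 := Set.indicator_of_mem (Set.mem_compl hp) _
      rw [h1, mul_one]
  have hgisq : ∀ p, gi p ^ (2:ℝ) = gi p := by
    intro p
    rw [hrp]
    by_cases hp : p ∈ tᶜ <;> simp [hgidef, Set.indicator_apply, hp]
  have hIgi : ∫ p, gi p ∂D = (D tᶜ).toReal := by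
    rw [hgidef, integral_indicator_const _ ht.compl, smul_eq_mul, mul_one, measureReal_def]
  have hintf : Integrable f D := ⟨hfmeas.aestronglyMeasurable,
    HasFiniteIntegral.of_bounded hfbd⟩
  have hintf2 : Integrable (fun p => f p ^ 2) D := by
    refine ⟨(hfmeas.pow_const 2).aestronglyMeasurable,
      HasFiniteIntegral.of_bounded (C := 1) ?_⟩
    filter_upwards [hfbd] with p hp
    calc ‖f p ^ 2‖ = ‖f p‖ ^ 2 := by rw [Real.norm_eq_abs, Real.norm_eq_abs, abs_pow]
    _ ≤ 1 := pow_le_one₀ (norm_nonneg _) hp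
  have hμ1f : marginMoment1 ev D Q ρ ≤ ∫ p, f p ∂D := by
    unfold marginMoment1
    exact integral_mono hint hintf fun p => le_max_left _ _
  have hf2le : ∫ p, f p ^ 2 ∂D ≤ marginMoment2 ev D Q ρ := by
    unfold marginMoment2
    refine integral_mono hintf2 hint2 fun p => ?_
    have h1 : -|margin ev Q ρ p| ≤ f p :=
      le_trans (neg_nonpos_of_nonneg (abs_nonneg _)) (le_max_right _ _)
    calc f p ^ 2 ≤ |margin ev Q ρ p| ^ 2 := sq_le_sq' h1 (hfle p)
    _ = margin ev Q ρ p ^ 2 := sq_abs _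
  -- combine Cauchy–Schwarz
  have hIf2nn : 0 ≤ ∫ p, f p ^ 2 ∂D := integral_nonneg fun p => sq_nonneg _
  have hcnn : (0:ℝ) ≤ (D tᶜ).toReal := ENNReal.toReal_nonneg
  have key : marginMoment1 ev D Q ρ ≤
      (∫ p, f p ^ 2 ∂D) ^ (1/2:ℝ) * ((D tᶜ).toReal) ^ (1/2:ℝ) := by
    refine le_trans hμ1f ?_
    calc ∫ p, f p ∂D = ∫ p, f p * gi p ∂D := by simp_rw [hfg]
    _ ≤ (∫ p, f p ^ (2:ℝ) ∂D) ^ (1/2:ℝ) * (∫ p, gi p ^ (2:ℝ) ∂D) ^ (1/2:ℝ) := hCS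
    _ = (∫ p, f p ^ 2 ∂D) ^ (1/2:ℝ) * ((D tᶜ).toReal) ^ (1/2:ℝ) := by
        simp_rw [hrp]
        rw [show (∫ p, gi p ^ 2 ∂D) = ∫ p, gi p ∂D by
          refine integral_congr_ae (Filter.Eventually.of_forall fun p => ?_)
          show gi p ^ 2 = gi p
          by_cases hp : p ∈ tᶜ <;> simp [hgidef, Set.indicator_apply, hp], hIgi]
  have hhalf : ∀ x : ℝ, 0 ≤ x → (x ^ (1/2:ℝ)) ^ 2 = x := by
    intro x hx
    rw [← Real.rpow_natCast (x ^ (1/2:ℝ)) 2, ← Real.rpow_mul hx]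
    norm_num
  have hsq : marginMoment1 ev D Q ρ ^ 2 ≤ (∫ p, f p ^ 2 ∂D) * (D tᶜ).toReal := by
    have h := pow_le_pow_left₀ hμ1.le key 2
    rwa [mul_pow, hhalf _ hIf2nn, hhalf _ hcnn] at h
  have hμsq2 : marginMoment1 ev D Q ρ ^ 2 ≤ marginMoment2 ev D Q ρ * (D tᶜ).toReal :=
    le_trans hsq (mul_le_mul_of_nonneg_right hf2le hcnn)
  -- totals
  have hsum : (D t).toReal + (D tᶜ).toReal = 1 := by
    rw [← ENNReal.toReal_add (measure_ne_top D t) (measure_ne_top D tᶜ),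
      measure_add_measure_compl ht, measure_univ, ENNReal.toReal_one]
  have hμ2nn : 0 ≤ marginMoment2 ev D Q ρ := integral_nonneg fun p => sq_nonneg _
  have hc1 : (D tᶜ).toReal ≤ 1 := by
    have : (0:ℝ) ≤ (D t).toReal := ENNReal.toReal_nonneg
    linarith
  have hμ2pos : 0 < marginMoment2 ev D Q ρ := by
    have h1 : marginMoment1 ev D Q ρ ^ 2 ≤ marginMoment2 ev D Q ρ :=
      le_trans hμsq2 (by nlinarith)
    nlinarith
  have h3 : marginVar ev D Q ρ / (marginVar ev D Q ρ + marginMoment1 ev D Q ρ ^ 2) =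
      1 - marginMoment1 ev D Q ρ ^ 2 / marginMoment2 ev D Q ρ := by
    unfold marginVar
    rw [show marginMoment2 ev D Q ρ - marginMoment1 ev D Q ρ ^ 2 +
        marginMoment1 ev D Q ρ ^ 2 = marginMoment2 ev D Q ρ by ring,
      sub_div, div_self hμ2pos.ne']
  have hpart2 : (D t).toReal ≤ 1 - marginMoment1 ev D Q ρ ^ 2 / marginMoment2 ev D Q ρ := by
    have hdiv : marginMoment1 ev D Q ρ ^ 2 / marginMoment2 ev D Q ρ ≤ (D tᶜ).toReal := by
      rw [div_le_iff₀ hμ2pos]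
      linarith [hμsq2]
    linarith
  exact ⟨hpart1, by rw [h3]; exact hpart2, h3⟩

end
end
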